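/- Let Φ and Φ' be I-Lagrangian frames in ℂ^{2L} with unitary stereographic projections U = Π(Φ) and U' = Π(Φ'). Then dim(Ran(Φ) ∩ Ran(Φ')) = dim Ker(U'* U - 1). -/

import Mathlib

open Matrix

variable {L : ℕ}

/-- The matrix `ℐ = (0,-1;1,0)` in `L×L` blocks. -/
def Iop (L : ℕ) : Matrix (Fin L ⊕ Fin L) (Fin L ⊕ Fin L) ℂ :=
  Matrix.fromBlocks 0 (-1) 1 0

/-- The Cayley matrix `2^{-1/2} (1, -i·1; 1, i·1)`. -/
noncomputable def cayley (L : ℕ) : Matrix (Fin L ⊕ Fin L) (Fin L ⊕ Fin L) ℂ :=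
  ((Real.sqrt 2 : ℂ))⁻¹ •
    Matrix.fromBlocks 1 ((-Complex.I) • (1 : Matrix (Fin L) (Fin L) ℂ)) 1
      (Complex.I • (1 : Matrix (Fin L) (Fin L) ℂ))

/-- The upper block `a` of `2^{-1/2}(1,-i1;1,i1)Φ`. -/
noncomputable def aMat (Φ : Matrix (Fin L ⊕ Fin L) (Fin L) ℂ) : Matrix (Fin L) (Fin L) ℂ :=
  (cayley L * Φ).submatrix Sum.inl id

/-- The lower block `b` of `2^{-1/2}(1,-i1;1,i1)Φ`. -/
noncomputable def bMat (Φ : Matrix (Fin L ⊕ Fin L) (Fin L) ℂ) : Matrix (Fin L) (Fin L) ℂ :=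
  (cayley L * Φ).submatrix Sum.inr id


/-- The stereographic projection `Π(Φ) = a b⁻¹`. -/
noncomputable def stereo (Φ : Matrix (Fin L ⊕ Fin L) (Fin L) ℂ) : Matrix (Fin L) (Fin L) ℂ :=
  aMat Φ * (bMat Φ)⁻¹


section Aux

/-- Inverse of the Cayley matrix. -/
noncomputable def cayleyInv (L : ℕ) : Matrix (Fin L ⊕ Fin L) (Fin L ⊕ Fin L) ℂ :=
  ((Real.sqrt 2 : ℂ))⁻¹ •
    Matrix.fromBlocks 1 1 (Complex.I • (1 : Matrix (Fin L) (Fin L) ℂ))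
      ((-Complex.I) • (1 : Matrix (Fin L) (Fin L) ℂ))

lemma sqrt2_inv_mul_self : ((Real.sqrt 2 : ℂ))⁻¹ * ((Real.sqrt 2 : ℂ))⁻¹ = (2:ℂ)⁻¹ := by
  rw [← mul_inv, ← Complex.ofReal_mul, Real.mul_self_sqrt (by norm_num)]; norm_num

lemma cayley_mul_cayleyInv : cayley L * cayleyInv L = 1 := by
  unfold cayley cayleyInv
  rw [Matrix.smul_mul, Matrix.mul_smul, smul_smul, sqrt2_inv_mul_self,
    Matrix.fromBlocks_multiply]
  simp only [Matrix.smul_mul, Matrix.mul_smul, smul_smul, Complex.I_mul_I,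
    Matrix.mul_one, Matrix.one_mul, neg_mul, mul_neg, neg_neg, one_smul, neg_smul,
    Complex.I_mul_I, neg_neg]
  simp [smul_smul, Complex.I_mul_I]
  have h2 : (Matrix.fromBlocks (1+1) 0 0 (1+1) :
      Matrix (Fin L ⊕ Fin L) (Fin L ⊕ Fin L) ℂ) = (2:ℂ) • 1 := by
    rw [← Matrix.fromBlocks_one, Matrix.fromBlocks_smul]; norm_num [two_smul]
  rw [h2, smul_smul]; norm_num

lemma cayleyInv_mul_cayley : cayleyInv L * cayley L = 1 := by
  rw [mul_eq_one_comm]; exact cayley_mul_cayleyInv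

/-- The key quadratic identity of the Cayley transform. -/
lemma cayley_quad :
    (cayley L)ᴴ * (Matrix.fromBlocks 1 0 0 (-1) :
        Matrix (Fin L ⊕ Fin L) (Fin L ⊕ Fin L) ℂ) * cayley L
      = Complex.I • Iop L := by
  unfold cayley Iop
  rw [Matrix.conjTranspose_smul, Matrix.smul_mul, Matrix.smul_mul, Matrix.mul_smul, smul_smul,
    Complex.star_def, map_inv₀, Complex.conj_ofReal, sqrt2_inv_mul_self]
  rw [Matrix.fromBlocks_conjTranspose, Matrix.fromBlocks_multiply, Matrix.fromBlocks_multiply]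
  simp only [Matrix.conjTranspose_neg, Matrix.conjTranspose_smul, Complex.star_def,
    Complex.conj_I, Matrix.conjTranspose_one, neg_neg, neg_smul,
    Matrix.mul_one, Matrix.one_mul, Matrix.mul_zero, Matrix.zero_mul, add_zero, zero_add,
    Matrix.mul_neg, Matrix.neg_mul, Matrix.smul_mul, Matrix.mul_smul, smul_smul,
    Complex.I_mul_I, one_smul, neg_zero, Matrix.fromBlocks_smul]
  exact Matrix.fromBlocks_inj.mpr ⟨by module, by module, by module, by module⟩

lemma fromRows_aMat_bMat (Φ : Matrix (Fin L ⊕ Fin L) (Fin L) ℂ) :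
    Matrix.fromRows (aMat Φ) (bMat Φ) = cayley L * Φ :=
  Matrix.fromRows_toRows _

lemma aMat_conj_mul (Φ : Matrix (Fin L ⊕ Fin L) (Fin L) ℂ) (hiso : Φᴴ * Iop L * Φ = 0) :
    (aMat Φ)ᴴ * aMat Φ = (bMat Φ)ᴴ * bMat Φ := by
  have e1 : (cayley L * Φ)ᴴ * (Matrix.fromBlocks 1 0 0 (-1) :
        Matrix (Fin L ⊕ Fin L) (Fin L ⊕ Fin L) ℂ) * (cayley L * Φ)
      = Complex.I • (Φᴴ * Iop L * Φ) := by
    rw [Matrix.conjTranspose_mul]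
    calc Φᴴ * (cayley L)ᴴ * (Matrix.fromBlocks 1 0 0 (-1) : Matrix (Fin L ⊕ Fin L) (Fin L ⊕ Fin L) ℂ) * (cayley L * Φ)
        = Φᴴ * ((cayley L)ᴴ * (Matrix.fromBlocks 1 0 0 (-1) : Matrix (Fin L ⊕ Fin L) (Fin L ⊕ Fin L) ℂ) * cayley L) * Φ := by
          simp only [Matrix.mul_assoc]
      _ = Complex.I • (Φᴴ * Iop L * Φ) := by
          rw [cayley_quad]
          simp only [Matrix.mul_smul, Matrix.smul_mul, Matrix.mul_assoc]
  have e2 : (cayley L * Φ)ᴴ * (Matrix.fromBlocks 1 0 0 (-1) :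
        Matrix (Fin L ⊕ Fin L) (Fin L ⊕ Fin L) ℂ) * (cayley L * Φ)
      = (aMat Φ)ᴴ * aMat Φ - (bMat Φ)ᴴ * bMat Φ := by
    rw [← fromRows_aMat_bMat]
    rw [Matrix.conjTranspose_fromRows_eq_fromCols_conjTranspose, Matrix.mul_assoc,
      Matrix.fromBlocks_mul_fromRows, Matrix.fromCols_mul_fromRows]
    simp [Matrix.neg_mul, sub_eq_add_neg]
  rw [hiso, smul_zero] at e1
  rw [e1] at e2
  linear_combination (norm := noncomm_ring) -e2

lemma mulVec_injective_of_rank (Φ : Matrix (Fin L ⊕ Fin L) (Fin L) ℂ)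
    (hrank : Φ.rank = L) : Function.Injective Φ.mulVec := by
  have h := Φ.mulVecLin.finrank_range_add_finrank_ker
  rw [show Module.finrank ℂ (LinearMap.range Φ.mulVecLin) = Φ.rank from rfl, hrank,
    Module.finrank_pi, Fintype.card_fin] at h
  have hker : LinearMap.ker Φ.mulVecLin = ⊥ :=
    Submodule.finrank_eq_zero.mp (by omega)
  have hinj : Function.Injective Φ.mulVecLin := LinearMap.ker_eq_bot.mp hker
  intro x y hxy
  exact hinj (by simpa [Matrix.mulVecLin_apply] using hxy)

lemma bMat_mulVec_eq_zero (Φ : Matrix (Fin L ⊕ Fin L) (Fin L) ℂ)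
    (hrank : Φ.rank = L) (hiso : Φᴴ * Iop L * Φ = 0) (x : Fin L → ℂ)
    (hb : bMat Φ *ᵥ x = 0) : x = 0 := by
  have ha : aMat Φ *ᵥ x = 0 := by
    have h1 : star (aMat Φ *ᵥ x) ⬝ᵥ (aMat Φ *ᵥ x) = 0 := by
      rw [Matrix.star_mulVec, ← Matrix.dotProduct_mulVec, Matrix.mulVec_mulVec,
        aMat_conj_mul Φ hiso, ← Matrix.mulVec_mulVec, Matrix.dotProduct_mulVec,
        ← Matrix.star_mulVec, hb]
      simp
    open scoped ComplexOrder in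
    exact dotProduct_star_self_eq_zero.mp h1
  have hC : (cayley L * Φ) *ᵥ x = 0 := by
    rw [← fromRows_aMat_bMat, Matrix.fromRows_mulVec, ha, hb]
    ext (i | i) <;> simp [Matrix.fromRows]
  have hΦ : Φ *ᵥ x = 0 := by
    have := congrArg (fun v => cayleyInv L *ᵥ v) hC
    simpa [← Matrix.mulVec_mulVec, Matrix.mulVec_mulVec, ← Matrix.mul_assoc,
      cayleyInv_mul_cayley] using this
  have := mulVec_injective_of_rank Φ hrank (a₁ := x) (a₂ := 0) (by simpa using hΦ)
  exact this

lemma bMat_isUnit (Φ : Matrix (Fin L ⊕ Fin L) (Fin L) ℂ)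
    (hrank : Φ.rank = L) (hiso : Φᴴ * Iop L * Φ = 0) : IsUnit (bMat Φ) := by
  rw [← Matrix.mulVec_injective_iff_isUnit]
  intro x y hxy
  have : bMat Φ *ᵥ (x - y) = 0 := by
    rw [Matrix.mulVec_sub, hxy, sub_self]
  have := bMat_mulVec_eq_zero Φ hrank hiso _ this
  exact sub_eq_zero.mp this

lemma stereo_unitary (Φ : Matrix (Fin L ⊕ Fin L) (Fin L) ℂ)
    (hrank : Φ.rank = L) (hiso : Φᴴ * Iop L * Φ = 0) :
    (stereo Φ)ᴴ * stereo Φ = 1 := by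
  have hbd : IsUnit (bMat Φ).det :=
    (Matrix.isUnit_iff_isUnit_det _).mp (bMat_isUnit Φ hrank hiso)
  unfold stereo
  rw [Matrix.conjTranspose_mul]
  calc ((bMat Φ)⁻¹)ᴴ * (aMat Φ)ᴴ * (aMat Φ * (bMat Φ)⁻¹)
      = ((bMat Φ)⁻¹)ᴴ * ((aMat Φ)ᴴ * aMat Φ) * (bMat Φ)⁻¹ := by
        simp [Matrix.mul_assoc]
    _ = ((bMat Φ)⁻¹)ᴴ * ((bMat Φ)ᴴ * bMat Φ) * (bMat Φ)⁻¹ := by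
        rw [aMat_conj_mul Φ hiso]
    _ = (bMat Φ * (bMat Φ)⁻¹)ᴴ * (bMat Φ * (bMat Φ)⁻¹) := by
        rw [Matrix.conjTranspose_mul]; simp [Matrix.mul_assoc]
    _ = 1 := by rw [Matrix.mul_nonsing_inv _ hbd]; simp

lemma cayley_mul_eq (Φ : Matrix (Fin L ⊕ Fin L) (Fin L) ℂ)
    (hrank : Φ.rank = L) (hiso : Φᴴ * Iop L * Φ = 0) :
    cayley L * Φ = Matrix.fromRows (stereo Φ) (1 : Matrix (Fin L) (Fin L) ℂ) * bMat Φ := by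
  have hbd : IsUnit (bMat Φ).det :=
    (Matrix.isUnit_iff_isUnit_det _).mp (bMat_isUnit Φ hrank hiso)
  rw [Matrix.fromRows_mul, ← fromRows_aMat_bMat, Matrix.one_mul]
  unfold stereo
  rw [Matrix.nonsing_inv_mul_cancel_right _ _ hbd]

lemma range_eq (Φ : Matrix (Fin L ⊕ Fin L) (Fin L) ℂ)
    (hrank : Φ.rank = L) (hiso : Φᴴ * Iop L * Φ = 0) :
    LinearMap.range Φ.mulVecLin
      = Submodule.map (cayleyInv L).mulVecLin
          (LinearMap.range (Matrix.fromRows (stereo Φ) 1).mulVecLin) := by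
  have hbd : IsUnit (bMat Φ) := bMat_isUnit Φ hrank hiso
  have h : Φ = cayleyInv L * (Matrix.fromRows (stereo Φ) (1 : Matrix (Fin L) (Fin L) ℂ) * bMat Φ) := by
    rw [← cayley_mul_eq Φ hrank hiso, ← Matrix.mul_assoc, cayleyInv_mul_cayley,
      Matrix.one_mul]
  conv_lhs => rw [h]
  rw [Matrix.mulVecLin_mul, Matrix.mulVecLin_mul, LinearMap.range_comp,
    LinearMap.range_comp, LinearMap.range_eq_top.mpr
      (Matrix.mulVec_surjective_iff_isUnit.mpr hbd), Submodule.map_top]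

end Aux

/-- for two `ℐ`-Lagrangian frames `Φ` and `Φ'` with stereographic
projections `U = Π(Φ)` and `U' = Π(Φ')`, the dimension of the intersection of their ranges
equals `dim Ker(U'* U - 1)`. -/
theorem intersection_dim_eq_ker_dim
    (Φ Φ' : Matrix (Fin L ⊕ Fin L) (Fin L) ℂ)
    (hrank : Φ.rank = L) (hiso : Φᴴ * Iop L * Φ = 0)
    (hrank' : Φ'.rank = L) (hiso' : Φ'ᴴ * Iop L * Φ' = 0) :
    Module.finrank ℂ ↥(LinearMap.range Φ.mulVecLin ⊓ LinearMap.range Φ'.mulVecLin)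
      = Module.finrank ℂ ↥(LinearMap.ker ((stereo Φ')ᴴ * stereo Φ - 1).mulVecLin) := by
  set U := stereo Φ with hU
  set U' := stereo Φ' with hU'
  set R := Matrix.fromRows U (1 : Matrix (Fin L) (Fin L) ℂ) with hR
  set R' := Matrix.fromRows U' (1 : Matrix (Fin L) (Fin L) ℂ) with hR'
  set K := U'ᴴ * U - 1 with hK
  have hU'unit : U'ᴴ * U' = 1 := stereo_unitary Φ' hrank' hiso'
  have hU'unit2 : U' * U'ᴴ = 1 := mul_eq_one_comm.mp hU'unit
  have hCinj : Function.Injective (cayleyInv L).mulVecLin := by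
    intro x y hxy
    have := congrArg (cayley L).mulVec hxy
    simpa [Matrix.mulVecLin_apply, Matrix.mulVec_mulVec, ← Matrix.mul_assoc,
      cayley_mul_cayleyInv, Matrix.one_mulVec] using this
  have hRinj : Function.Injective R.mulVecLin := by
    intro x y hxy
    funext i
    have := congrFun hxy (Sum.inr i)
    simpa [hR, Matrix.mulVecLin_apply, Matrix.fromRows_mulVec,
      Matrix.one_mulVec] using this
  have hinter : LinearMap.range R.mulVecLin ⊓ LinearMap.range R'.mulVecLin
      = Submodule.map R.mulVecLin (LinearMap.ker K.mulVecLin) := by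
    ext v
    rw [Submodule.mem_inf, Submodule.mem_map]
    constructor
    · rintro ⟨⟨x, hx⟩, ⟨y, hy⟩⟩
      have hxy : x = y := by
        funext i
        have := congrFun (hx.trans hy.symm) (Sum.inr i)
        simpa [hR, hR', Matrix.mulVecLin_apply, Matrix.fromRows_mulVec,
          Matrix.one_mulVec] using this
      have htop : U *ᵥ x = U' *ᵥ x := by
        funext i
        have := congrFun (hx.trans hy.symm) (Sum.inl i)
        simpa [hR, hR', hxy, Matrix.mulVecLin_apply, Matrix.fromRows_mulVec] using this
      refine ⟨x, ?_, hx⟩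
      rw [LinearMap.mem_ker]
      show K *ᵥ x = 0
      rw [hK, Matrix.sub_mulVec, ← Matrix.mulVec_mulVec, htop,
        Matrix.mulVec_mulVec, hU'unit, Matrix.one_mulVec]
      simp
    · rintro ⟨x, hxker, hx⟩
      have hker' : K *ᵥ x = 0 := hxker
      have hfix : U'ᴴ *ᵥ (U *ᵥ x) = x := by
        rw [hK, Matrix.sub_mulVec, sub_eq_zero, Matrix.one_mulVec] at hker'
        rw [Matrix.mulVec_mulVec, hker']
      have htop : U *ᵥ x = U' *ᵥ x := by
        have := congrArg (U' *ᵥ ·) hfix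
        simpa [Matrix.mulVec_mulVec, ← Matrix.mul_assoc, hU'unit2,
          Matrix.one_mulVec] using this
      constructor
      · exact ⟨x, hx⟩
      · refine ⟨x, ?_⟩
        rw [← hx]
        show R' *ᵥ x = R *ᵥ x
        rw [hR, hR', Matrix.fromRows_mulVec, Matrix.fromRows_mulVec, htop]
  rw [range_eq Φ hrank hiso, range_eq Φ' hrank' hiso',
    ← Submodule.map_inf _ hCinj, hinter, ← Submodule.map_comp]
  have hcomp : Function.Injective ((cayleyInv L).mulVecLin ∘ₗ R.mulVecLin) :=
    hCinj.comp hRinj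
  exact ((Submodule.equivMapOfInjective _ hcomp
    (LinearMap.ker K.mulVecLin)).finrank_eq).symm
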